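/- For all l, d, n ∈ ℕ there exists an L_HA-sentence σ, which can be taken of the form ∀x̄ ∃ȳ θ with θ quantifier-free, such that for every Heyting algebra A: h_{l,d}(A) ≤ n if and only if A satisfies σ. -/

import Mathlib

/-- Formal Heyting terms in `n` variables. -/
inductive HeytingTerm (n : ℕ) : Type
  | var : Fin n → HeytingTerm n
  | bot : HeytingTerm n
  | top : HeytingTerm n
  | inf : HeytingTerm n → HeytingTerm n → HeytingTerm n
  | sup : HeytingTerm n → HeytingTerm n → HeytingTerm n
  | himp : HeytingTerm n → HeytingTerm n → HeytingTerm n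

namespace HeytingTerm

/-- Evaluation of a Heyting term in a Heyting algebra. -/
def eval {n : ℕ} {H : Type*} [HeytingAlgebra H] (v : Fin n → H) : HeytingTerm n → H
  | var i => v i
  | bot => ⊥
  | top => ⊤
  | inf a b => a.eval v ⊓ b.eval v
  | sup a b => a.eval v ⊔ b.eval v
  | himp a b => a.eval v ⇨ b.eval v

/-- The degree of a Heyting term: the maximal number of nested occurrences of `⇨`. -/
def degree {n : ℕ} : HeytingTerm n → ℕ
  | var _ => 0
  | bot => 0
  | top => 0
  | inf a b => max a.degree b.degree
  | sup a b => max a.degree b.degree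
  | himp a b => max a.degree b.degree + 1

end HeytingTerm

/-- `b` is a solution of the system `(t, s₁, …, s_κ)` with parameters `a`. -/
def IsSolution {l m κ : ℕ} {H : Type*} [HeytingAlgebra H]
    (t : HeytingTerm (l + m)) (s : Fin κ → HeytingTerm (l + m))
    (a : Fin l → H) (b : Fin m → H) : Prop :=
  t.eval (Fin.append a b) = ⊤ ∧ ∀ k, (s k).eval (Fin.append a b) ≠ ⊤

/-- The system `(t, s₁, …, s_κ)` with parameters `a` has a solution in `H`. -/
def HasSolution {l m κ : ℕ} {H : Type*} [HeytingAlgebra H]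
    (t : HeytingTerm (l + m)) (s : Fin κ → HeytingTerm (l + m)) (a : Fin l → H) : Prop :=
  ∃ b : Fin m → H, IsSolution t s a b

/-- `a ≈ₙ a'`: the tuples satisfy the same equations `t = ⊤` for terms of degree `≤ n`. -/
def SimDeg {l : ℕ} {A : Type*} [HeytingAlgebra A] (n : ℕ) (a a' : Fin l → A) : Prop :=
  ∀ t : HeytingTerm l, t.degree ≤ n → (t.eval a = ⊤ ↔ t.eval a' = ⊤)

/-- `n` witnesses the `(l,d)`-index property for `A`: for all `a ≈ₙ a'` and every system
of degree `≤ d` in `l` parameters and one unknown, `S(a,q)` is solvable in `A` iff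
`S(a',q)` is. -/
def IndexProp (A : Type*) [HeytingAlgebra A] (l d n : ℕ) : Prop :=
  ∀ a a' : Fin l → A, SimDeg n a a' →
    ∀ (κ : ℕ) (t : HeytingTerm (l + 1)) (s : Fin κ → HeytingTerm (l + 1)),
      t.degree ≤ d → (∀ k, (s k).degree ≤ d) →
      (HasSolution t s a ↔ HasSolution t s a')

/-- The `(l,d)`-index `h_{l,d}(A) ∈ ℕ ∪ {∞}`: the least `n` satisfying `IndexProp A l d n`,
or `∞` if there is none. -/
noncomputable def hIndex (A : Type*) [HeytingAlgebra A] (l d : ℕ) : ℕ∞ :=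
  sInf {x : ℕ∞ | ∃ n : ℕ, x = ↑n ∧ IndexProp A l d n}

/-- The QE property: all the `(l,d)`-indices are finite. -/
def HasQEProp (A : Type*) [HeytingAlgebra A] : Prop :=
  ∀ l d : ℕ, hIndex A l d < ⊤

/-- The function symbols of the first-order language of Heyting algebras: two constants
(`⊥`, `⊤`) and three binary operations (`⊓`, `⊔`, `⇨`). -/
inductive LHAFunc : ℕ → Type
  | bot : LHAFunc 0
  | top : LHAFunc 0
  | inf : LHAFunc 2
  | sup : LHAFunc 2
  | himp : LHAFunc 2

/-- The first-order language of Heyting algebras. -/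
def LHA : FirstOrder.Language := ⟨LHAFunc, fun _ => Empty⟩

/-- Every Heyting algebra is an `LHA`-structure, interpreting the symbols by the
Heyting operations. -/
instance LHA.structure (H : Type*) [HeytingAlgebra H] : LHA.Structure H where
  funMap {_} f x :=
    match f with
    | .bot => ⊥
    | .top => ⊤
    | .inf => x 0 ⊓ x 1
    | .sup => x 0 ⊔ x 1
    | .himp => x 0 ⇨ x 1
  RelMap {_} r := Empty.elim r

/-- Existential closure of the last `b` bound variables of a bounded formula. -/
def exsN {L : FirstOrder.Language} {α : Type*} :
    ∀ {a b : ℕ}, L.BoundedFormula α (a + b) → L.BoundedFormula α a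
  | _, 0, φ => φ
  | _, _ + 1, φ => exsN φ.ex


/-! ### Auxiliary development -/

deriving instance DecidableEq for HeytingTerm

namespace HIndexAux

open HeytingTerm

universe u

/-- Semantic equivalence of Heyting terms. -/
def HEquiv {k : ℕ} (t t' : HeytingTerm k) : Prop :=
  ∀ (H : Type u) [HeytingAlgebra H] (v : Fin k → H), t.eval v = t'.eval v

lemma HEquiv.refl {k : ℕ} (t : HeytingTerm k) : HEquiv.{u} t t := fun _ _ _ => rfl

lemma HEquiv.symm {k : ℕ} {t t' : HeytingTerm k} (h : HEquiv.{u} t t') : HEquiv.{u} t' t :=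
  fun H _ v => (h H v).symm

lemma HEquiv.trans {k : ℕ} {t₁ t₂ t₃ : HeytingTerm k} (h : HEquiv.{u} t₁ t₂)
    (h' : HEquiv.{u} t₂ t₃) : HEquiv.{u} t₁ t₃ := fun H _ v => (h H v).trans (h' H v)

lemma HEquiv.inf {k : ℕ} {t₁ t₂ s₁ s₂ : HeytingTerm k} (h₁ : HEquiv.{u} t₁ s₁)
    (h₂ : HEquiv.{u} t₂ s₂) : HEquiv.{u} (t₁.inf t₂) (s₁.inf s₂) := by
  intro H _ v; simp [eval, h₁ H v, h₂ H v]

lemma HEquiv.sup {k : ℕ} {t₁ t₂ s₁ s₂ : HeytingTerm k} (h₁ : HEquiv.{u} t₁ s₁)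
    (h₂ : HEquiv.{u} t₂ s₂) : HEquiv.{u} (t₁.sup t₂) (s₁.sup s₂) := by
  intro H _ v; simp [eval, h₁ H v, h₂ H v]

lemma HEquiv.himp {k : ℕ} {t₁ t₂ s₁ s₂ : HeytingTerm k} (h₁ : HEquiv.{u} t₁ s₁)
    (h₂ : HEquiv.{u} t₂ s₂) : HEquiv.{u} (t₁.himp t₂) (s₁.himp s₂) := by
  intro H _ v; simp [eval, h₁ H v, h₂ H v]

/-- Join of a list of terms. -/
def bigSup {k : ℕ} : List (HeytingTerm k) → HeytingTerm k := List.foldr .sup .bot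

/-- Meet of a list of terms. -/
def bigInf {k : ℕ} : List (HeytingTerm k) → HeytingTerm k := List.foldr .inf .top

lemma eval_bigSup {k : ℕ} {H : Type u} [HeytingAlgebra H] (v : Fin k → H)
    (m : List (HeytingTerm k)) :
    (bigSup m).eval v = (m.map (eval v)).foldr (· ⊔ ·) ⊥ := by
  induction m with
  | nil => rfl
  | cons a m ih => simp [bigSup, eval, List.foldr] at ih ⊢; rw [ih]

lemma eval_bigInf {k : ℕ} {H : Type u} [HeytingAlgebra H] (v : Fin k → H)
    (m : List (HeytingTerm k)) :
    (bigInf m).eval v = (m.map (eval v)).foldr (· ⊓ ·) ⊤ := by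
  induction m with
  | nil => rfl
  | cons a m ih => simp [bigInf, eval, List.foldr] at ih ⊢; rw [ih]

section Lattice
variable {H : Type u} [HeytingAlgebra H]

lemma le_foldrSup {x : H} {L : List H} (h : x ∈ L) : x ≤ L.foldr (· ⊔ ·) ⊥ := by
  induction L with
  | nil => simp at h
  | cons a L ih =>
    rcases List.mem_cons.1 h with rfl | h
    · exact le_sup_left
    · exact le_sup_of_le_right (ih h)

lemma foldrSup_le {y : H} {L : List H} (h : ∀ x ∈ L, x ≤ y) : L.foldr (· ⊔ ·) ⊥ ≤ y := by
  induction L with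
  | nil => simp
  | cons a L ih =>
    exact sup_le (h a (by simp)) (ih fun x hx => h x (by simp [hx]))

lemma foldrInf_le {x : H} {L : List H} (h : x ∈ L) : L.foldr (· ⊓ ·) ⊤ ≤ x := by
  induction L with
  | nil => simp at h
  | cons a L ih =>
    rcases List.mem_cons.1 h with rfl | h
    · exact inf_le_left
    · exact inf_le_of_right_le (ih h)

lemma le_foldrInf {y : H} {L : List H} (h : ∀ x ∈ L, y ≤ x) : y ≤ L.foldr (· ⊓ ·) ⊤ := by
  induction L with
  | nil => simp
  | cons a L ih =>
    exact le_inf (h a (by simp)) (ih fun x hx => h x (by simp [hx]))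

end Lattice

lemma bigSup_equiv {k : ℕ} {m₁ m₂ : List (HeytingTerm k)} (h : ∀ x, x ∈ m₁ ↔ x ∈ m₂) :
    HEquiv.{u} (bigSup m₁) (bigSup m₂) := by
  intro H _ v
  rw [eval_bigSup, eval_bigSup]
  apply le_antisymm <;>
    refine foldrSup_le fun x hx => ?_ <;>
    obtain ⟨t, ht, rfl⟩ := List.mem_map.1 hx
  · exact le_foldrSup (List.mem_map_of_mem ((h t).1 ht))
  · exact le_foldrSup (List.mem_map_of_mem ((h t).2 ht))

lemma bigInf_equiv {k : ℕ} {m₁ m₂ : List (HeytingTerm k)} (h : ∀ x, x ∈ m₁ ↔ x ∈ m₂) :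
    HEquiv.{u} (bigInf m₁) (bigInf m₂) := by
  intro H _ v
  rw [eval_bigInf, eval_bigInf]
  apply le_antisymm <;>
    refine le_foldrInf fun x hx => ?_ <;>
    obtain ⟨t, ht, rfl⟩ := List.mem_map.1 hx
  · exact foldrInf_le (List.mem_map_of_mem ((h t).2 ht))
  · exact foldrInf_le (List.mem_map_of_mem ((h t).1 ht))

lemma bigSup_congr {k : ℕ} {α : Type} {m : List α} {f g : α → HeytingTerm k}
    (h : ∀ x ∈ m, HEquiv.{u} (f x) (g x)) :
    HEquiv.{u} (bigSup (m.map f)) (bigSup (m.map g)) := by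
  induction m with
  | nil => exact HEquiv.refl _
  | cons a m ih =>
    intro H _ v
    have h1 := h a (by simp) H v
    have h2 := ih (fun x hx => h x (by simp [hx])) H v
    simp only [List.map_cons, bigSup, List.foldr, eval] at h2 ⊢
    rw [h1, h2]

lemma bigSup_append {k : ℕ} (m₁ m₂ : List (HeytingTerm k)) :
    HEquiv.{u} (bigSup (m₁ ++ m₂)) ((bigSup m₁).sup (bigSup m₂)) := by
  induction m₁ with
  | nil => intro H _ v; simp [bigSup, eval]
  | cons a m ih =>
    intro H _ v
    have := ih H v
    simp only [bigSup, List.foldr, eval, List.cons_append, List.append_eq] at this ⊢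
    rw [this, sup_assoc]

lemma bigInf_append {k : ℕ} (m₁ m₂ : List (HeytingTerm k)) :
    HEquiv.{u} (bigInf (m₁ ++ m₂)) ((bigInf m₁).inf (bigInf m₂)) := by
  induction m₁ with
  | nil => intro H _ v; simp [bigInf, eval]
  | cons a m ih =>
    intro H _ v
    have := ih H v
    simp only [bigInf, List.foldr, eval, List.cons_append, List.append_eq] at this ⊢
    rw [this, inf_assoc]

end HIndexAux

namespace HIndexAux

open HeytingTerm

universe u

/-- Distribution lemma: meet of two joins. -/
lemma sup_inf_distrib {k : ℕ} (m₁ m₂ : List (HeytingTerm k)) :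
    HEquiv.{u} ((bigSup m₁).inf (bigSup m₂))
      (bigSup (m₁.flatMap fun x => m₂.map fun y => x.inf y)) := by
  induction m₁ with
  | nil => intro H _ v; simp [bigSup, eval]
  | cons a m ih =>
    have key : HEquiv.{u} ((HeytingTerm.sup a (bigSup m)).inf (bigSup m₂))
        ((a.inf (bigSup m₂)).sup ((bigSup m).inf (bigSup m₂))) := by
      intro H _ v; simp only [eval]; exact inf_sup_right _ _ _
    have ha : HEquiv.{u} (a.inf (bigSup m₂)) (bigSup (m₂.map fun y => a.inf y)) := by
      clear ih key
      induction m₂ with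
      | nil => intro H _ v; simp [bigSup, eval]
      | cons b m₂ ih2 =>
        intro H _ v
        have := ih2 H v
        simp only [bigSup, List.foldr, eval, List.map_cons] at this ⊢
        rw [inf_sup_left, this]
    have : HEquiv.{u} ((bigSup (a :: m)).inf (bigSup m₂))
        ((bigSup (m₂.map fun y => a.inf y)).sup
          (bigSup (m.flatMap fun x => m₂.map fun y => x.inf y))) :=
      key.trans (ha.sup ih)
    refine this.trans ?_
    have := bigSup_append.{u} (m₂.map fun y => a.inf y)
      (m.flatMap fun x => m₂.map fun y => x.inf y)
    simpa [List.flatMap_cons] using this.symm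

/-- The finite "disjunctive normal form" closure of a list of generators. -/
def Cl {k : ℕ} (G : List (HeytingTerm k)) : List (HeytingTerm k) :=
  ((G.sublists.map bigInf).sublists).map bigSup

/-- Normal form relative to a generator list. -/
def IsNF {k : ℕ} (G : List (HeytingTerm k)) (t : HeytingTerm k) : Prop :=
  ∃ m : List (List (HeytingTerm k)),
    (∀ u ∈ m, ∀ y ∈ u, y ∈ G) ∧ HEquiv.{u} t (bigSup (m.map bigInf))

lemma IsNF.congr {k : ℕ} {G : List (HeytingTerm k)} {t t' : HeytingTerm k}
    (h : HEquiv.{u} t t') (h' : IsNF.{u} G t') : IsNF.{u} G t := by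
  obtain ⟨m, hm, he⟩ := h'
  exact ⟨m, hm, h.trans he⟩

lemma isNF_of_mem {k : ℕ} {G : List (HeytingTerm k)} {g : HeytingTerm k} (hg : g ∈ G) :
    IsNF.{u} G g := by
  refine ⟨[[g]], by simpa using hg, ?_⟩
  intro H _ v
  simp [bigSup, bigInf, eval]

lemma isNF_bot {k : ℕ} {G : List (HeytingTerm k)} : IsNF.{u} G .bot := by
  exact ⟨[], by simp, fun H _ v => rfl⟩

lemma isNF_top {k : ℕ} {G : List (HeytingTerm k)} : IsNF.{u} G .top := by
  refine ⟨[[]], by simp, ?_⟩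
  intro H _ v
  simp [bigSup, bigInf, eval]

lemma IsNF.sup {k : ℕ} {G : List (HeytingTerm k)} {t₁ t₂ : HeytingTerm k}
    (h₁ : IsNF.{u} G t₁) (h₂ : IsNF.{u} G t₂) : IsNF.{u} G (t₁.sup t₂) := by
  obtain ⟨m₁, hm₁, he₁⟩ := h₁
  obtain ⟨m₂, hm₂, he₂⟩ := h₂
  refine ⟨m₁ ++ m₂, ?_, ?_⟩
  · intro u hu; rcases List.mem_append.1 hu with h | h
    · exact hm₁ u h
    · exact hm₂ u h
  · refine (he₁.sup he₂).trans ?_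
    have := (bigSup_append.{u} (m₁.map bigInf) (m₂.map bigInf)).symm
    simpa [List.map_append] using this

lemma IsNF.inf {k : ℕ} {G : List (HeytingTerm k)} {t₁ t₂ : HeytingTerm k}
    (h₁ : IsNF.{u} G t₁) (h₂ : IsNF.{u} G t₂) : IsNF.{u} G (t₁.inf t₂) := by
  obtain ⟨m₁, hm₁, he₁⟩ := h₁
  obtain ⟨m₂, hm₂, he₂⟩ := h₂
  refine ⟨m₁.flatMap fun u => m₂.map fun w => u ++ w, ?_, ?_⟩
  · intro u hu
    obtain ⟨x, hx, hu⟩ := List.mem_flatMap.1 hu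
    obtain ⟨y, hy, rfl⟩ := List.mem_map.1 hu
    intro z hz
    rcases List.mem_append.1 hz with h | h
    · exact hm₁ x hx z h
    · exact hm₂ y hy z h
  · refine ((he₁.inf he₂).trans (sup_inf_distrib _ _)).trans ?_
    have e1 : ((m₁.map bigInf).flatMap fun x => (m₂.map bigInf).map fun y => x.inf y)
        = (m₁.flatMap fun u => m₂.map fun w => (u, w)).map
            fun p => (bigInf p.1).inf (bigInf p.2) := by
      simp [List.map_flatMap, List.flatMap_map, List.map_map, Function.comp_def]
    have e2 : ((m₁.flatMap fun u => m₂.map fun w => u ++ w).map bigInf)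
        = (m₁.flatMap fun u => m₂.map fun w => (u, w)).map fun p => bigInf (p.1 ++ p.2) := by
      simp [List.map_flatMap, List.flatMap_map, List.map_map, Function.comp_def]
    rw [e1, e2]
    exact bigSup_congr fun p _ => (bigInf_append p.1 p.2).symm

lemma isNF_to_cl {k : ℕ} {G : List (HeytingTerm k)} {t : HeytingTerm k} (h : IsNF.{u} G t) :
    ∃ r ∈ Cl G, HEquiv.{u} t r := by
  classical
  obtain ⟨m, hm, he⟩ := h
  set ms : List (HeytingTerm k) := G.sublists.map bigInf with hms
  -- replace each conjunct by a canonical one in `ms`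
  have step1 : HEquiv.{u} (bigSup (m.map bigInf))
      (bigSup (m.map fun u => bigInf (G.filter (· ∈ u)))) := by
    refine bigSup_congr fun u hu => ?_
    refine bigInf_equiv fun x => ?_
    simp only [List.mem_filter, decide_eq_true_eq]
    exact ⟨fun hx => ⟨hm u hu x hx, hx⟩, fun hx => hx.2⟩
  set m'' : List (HeytingTerm k) := m.map fun u => bigInf (G.filter (· ∈ u)) with hm''
  have hmem : ∀ x ∈ m'', x ∈ ms := by
    intro x hx
    obtain ⟨u, hu, rfl⟩ := List.mem_map.1 hx
    exact List.mem_map.2 ⟨G.filter (· ∈ u), List.mem_sublists.2 (List.filter_sublist), rfl⟩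
  refine ⟨bigSup (ms.filter (· ∈ m'')), ?_, ?_⟩
  · exact List.mem_map.2 ⟨ms.filter (· ∈ m''), List.mem_sublists.2 (List.filter_sublist), rfl⟩
  · refine (he.trans step1).trans ?_
    refine bigSup_equiv fun x => ?_
    simp only [List.mem_filter, decide_eq_true_eq]
    exact ⟨fun hx => ⟨hmem x hx, hx⟩, fun hx => hx.2⟩

lemma degree_bigSup_le {k e : ℕ} {m : List (HeytingTerm k)} (h : ∀ x ∈ m, degree x ≤ e) :
    degree (bigSup m) ≤ e := by
  induction m with
  | nil => simp [bigSup, degree]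
  | cons a m ih =>
    simp only [bigSup, List.foldr, degree, max_le_iff]
    exact ⟨h a (by simp), ih fun x hx => h x (by simp [hx])⟩

lemma degree_bigInf_le {k e : ℕ} {m : List (HeytingTerm k)} (h : ∀ x ∈ m, degree x ≤ e) :
    degree (bigInf m) ≤ e := by
  induction m with
  | nil => simp [bigInf, degree]
  | cons a m ih =>
    simp only [bigInf, List.foldr, degree, max_le_iff]
    exact ⟨h a (by simp), ih fun x hx => h x (by simp [hx])⟩

lemma degree_cl_le {k e : ℕ} {G : List (HeytingTerm k)} (h : ∀ g ∈ G, degree g ≤ e) :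
    ∀ r ∈ Cl G, degree r ≤ e := by
  intro r hr
  obtain ⟨ml, hml, rfl⟩ := List.mem_map.1 hr
  refine degree_bigSup_le fun x hx => ?_
  have hx' := (List.mem_sublists.1 hml).subset hx
  obtain ⟨u, hu, rfl⟩ := List.mem_map.1 hx'
  exact degree_bigInf_le fun y hy => h y ((List.mem_sublists.1 hu).subset hy)

/-- Base generators: `⊥`, `⊤` and the variables. -/
def baseG (l : ℕ) : List (HeytingTerm l) := .bot :: .top :: (List.finRange l).map .var

/-- Generators for degree `d`. -/
def gensOf (l : ℕ) : ℕ → List (HeytingTerm l)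
  | 0 => baseG l
  | d + 1 => baseG l ++ ((gensOf l d |> Cl).flatMap fun a =>
      (gensOf l d |> Cl).map fun b => .himp a b)

/-- Finitely many representatives of terms of degree at most `d`. -/
def reps (l d : ℕ) : List (HeytingTerm l) := Cl (gensOf l d)

lemma degree_gensOf_le (l : ℕ) : ∀ d, ∀ g ∈ gensOf l d, degree g ≤ d := by
  intro d
  induction d with
  | zero =>
    intro g hg
    simp only [gensOf, baseG, List.mem_cons, List.mem_map] at hg
    rcases hg with rfl | rfl | ⟨i, _, rfl⟩ <;> simp [degree]
  | succ d ih =>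
    intro g hg
    rcases List.mem_append.1 hg with hg | hg
    · simp only [baseG, List.mem_cons, List.mem_map] at hg
      rcases hg with rfl | rfl | ⟨i, _, rfl⟩ <;> simp [degree]
    · obtain ⟨x, hx, hg⟩ := List.mem_flatMap.1 hg
      obtain ⟨y, hy, rfl⟩ := List.mem_map.1 hg
      have hx' := degree_cl_le ih x hx
      have hy' := degree_cl_le ih y hy
      simp only [degree, max_le_iff]
      omega

lemma degree_reps_le {l d : ℕ} : ∀ r ∈ reps l d, degree r ≤ d :=
  degree_cl_le (degree_gensOf_le l d)

lemma baseG_subset_gensOf (l d : ℕ) : ∀ g ∈ baseG l, g ∈ gensOf l d := by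
  intro g hg
  cases d with
  | zero => exact hg
  | succ d => exact List.mem_append.2 (Or.inl hg)

lemma isNF_gensOf_of_degree_le {l : ℕ} :
    ∀ (t : HeytingTerm l) (d : ℕ), t.degree ≤ d → IsNF.{u} (gensOf l d) t := by
  intro t
  induction t with
  | var i =>
    intro d _
    exact isNF_of_mem (baseG_subset_gensOf l d _ (by simp [baseG]))
  | bot => intro d _; exact isNF_bot
  | top => intro d _; exact isNF_top
  | inf a b iha ihb =>
    intro d hd
    simp only [degree, max_le_iff] at hd
    exact (iha d hd.1).inf (ihb d hd.2)
  | sup a b iha ihb =>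
    intro d hd
    simp only [degree, max_le_iff] at hd
    exact (iha d hd.1).sup (ihb d hd.2)
  | himp a b iha ihb =>
    intro d hd
    simp only [degree] at hd
    obtain ⟨e, rfl⟩ : ∃ e, d = e + 1 := by
      cases d with
      | zero => omega
      | succ e => exact ⟨e, rfl⟩
    have ha : a.degree ≤ e := by omega
    have hb : b.degree ≤ e := by omega
    obtain ⟨ra, hra, hea⟩ := isNF_to_cl.{u} (iha e ha)
    obtain ⟨rb, hrb, heb⟩ := isNF_to_cl.{u} (ihb e hb)
    refine IsNF.congr (hea.himp heb) (isNF_of_mem ?_)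
    refine List.mem_append.2 (Or.inr ?_)
    exact List.mem_flatMap.2 ⟨ra, hra, List.mem_map.2 ⟨rb, hrb, rfl⟩⟩

/-- Every term of degree at most `d` is equivalent to a representative. -/
lemma reps_complete {l : ℕ} (t : HeytingTerm l) {d : ℕ} (hd : t.degree ≤ d) :
    ∃ r ∈ reps l d, HEquiv.{u} t r :=
  isNF_to_cl (isNF_gensOf_of_degree_le t d hd)

end HIndexAux

namespace HIndexAux

open HeytingTerm

universe u

variable {l d n : ℕ} {A : Type u} [HeytingAlgebra A]

/-- A solution of a finite-list system at a single unknown value. -/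
def SolAt (p : HeytingTerm (l + 1) × List (HeytingTerm (l + 1))) (a : Fin l → A) (x : A) : Prop :=
  p.1.eval (Fin.snoc a x) = ⊤ ∧ ∀ s ∈ p.2, s.eval (Fin.snoc a x) ≠ ⊤

/-- Finite agreement on representatives. -/
def AgreeOn (n : ℕ) (a a' : Fin l → A) : Prop :=
  ∀ r ∈ reps l n, (r.eval a = ⊤ ↔ r.eval a' = ⊤)

/-- The list of all systems with a representative term and a list of representative
inequations. -/
def sysList (l d : ℕ) : List (HeytingTerm (l + 1) × List (HeytingTerm (l + 1))) :=
  (reps (l + 1) d).flatMap fun t => ((reps (l + 1) d).sublists).map fun S => (t, S)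

/-- The finitary, one-directional version of `IndexProp`. -/
def FinIndexProp (A : Type u) [HeytingAlgebra A] (l d n : ℕ) : Prop :=
  ∀ a a' : Fin l → A, AgreeOn n a a' →
    ∀ p ∈ sysList l d, (∃ x : A, SolAt p a x) → ∃ x : A, SolAt p a' x

lemma simDeg_iff_agreeOn {a a' : Fin l → A} : SimDeg n a a' ↔ AgreeOn n a a' := by
  constructor
  · intro h r hr
    exact h r (degree_reps_le r hr)
  · intro h t ht
    obtain ⟨r, hr, he⟩ := reps_complete.{u} t ht
    rw [he A a, he A a']
    exact h r hr

lemma agreeOn_symm {a a' : Fin l → A} (h : AgreeOn n a a') : AgreeOn n a' a := fun r hr =>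
  (h r hr).symm

lemma hasSolution_iff_solAt {κ : ℕ} (t : HeytingTerm (l + 1)) (s : Fin κ → HeytingTerm (l + 1))
    (t' : HeytingTerm (l + 1)) (S : List (HeytingTerm (l + 1)))
    (ht : HEquiv.{u} t t') (hs : ∀ k, ∃ s' ∈ S, HEquiv.{u} (s k) s')
    (hS : ∀ s' ∈ S, ∃ k, HEquiv.{u} (s k) s') (a : Fin l → A) :
    HasSolution t s a ↔ ∃ x : A, SolAt (t', S) a x := by
  constructor
  · rintro ⟨b, hb1, hb2⟩
    refine ⟨b 0, ?_, ?_⟩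
    · rw [← ht A, ← Fin.append_right_eq_snoc a b]; exact hb1
    · intro s' hs'
      obtain ⟨k, hk⟩ := hS s' hs'
      rw [← hk A, ← Fin.append_right_eq_snoc a b]
      exact hb2 k
  · rintro ⟨x, hx1, hx2⟩
    refine ⟨fun _ => x, ?_, fun k => ?_⟩
    · rw [Fin.append_right_eq_snoc, ht A]; exact hx1
    · obtain ⟨s', hs', he⟩ := hs k
      rw [Fin.append_right_eq_snoc, he A]
      exact hx2 s' hs'

lemma mem_sysList {p : HeytingTerm (l + 1) × List (HeytingTerm (l + 1))} :
    p ∈ sysList l d ↔ p.1 ∈ reps (l + 1) d ∧ List.Sublist p.2 (reps (l + 1) d) := by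
  constructor
  · intro hp
    obtain ⟨t, ht, hp⟩ := List.mem_flatMap.1 hp
    obtain ⟨S, hS, rfl⟩ := List.mem_map.1 hp
    exact ⟨ht, List.mem_sublists.1 hS⟩
  · rintro ⟨h1, h2⟩
    exact List.mem_flatMap.2 ⟨p.1, h1, List.mem_map.2 ⟨p.2, List.mem_sublists.2 h2, rfl⟩⟩

lemma indexProp_iff_finIndexProp : IndexProp A l d n ↔ FinIndexProp A l d n := by
  classical
  constructor
  · -- IndexProp → FinIndexProp
    intro h a a' hagree p hp hsol
    obtain ⟨hp1, hp2⟩ := mem_sysList.1 hp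
    have hdeg : p.1.degree ≤ d := degree_reps_le _ hp1
    have hdegs : ∀ k : Fin p.2.length, (p.2.get k).degree ≤ d := fun k =>
      degree_reps_le _ (hp2.subset (p.2.get_mem k))
    have key := h a a' (simDeg_iff_agreeOn.2 hagree) p.2.length p.1 p.2.get hdeg hdegs
    have conv : ∀ b : Fin l → A,
        HasSolution p.1 p.2.get b ↔ ∃ x : A, SolAt p b x := by
      intro b
      refine hasSolution_iff_solAt p.1 p.2.get p.1 p.2 (HEquiv.refl _) ?_ ?_ b
      · intro k; exact ⟨p.2.get k, p.2.get_mem k, HEquiv.refl _⟩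
      · intro s' hs'
        obtain ⟨k, hk⟩ := List.mem_iff_get.1 hs'
        exact ⟨k, hk ▸ HEquiv.refl _⟩
    exact (conv a').1 (key.1 ((conv a).2 hsol))
  · -- FinIndexProp → IndexProp
    intro h a a' hsim κ t s hdt hds
    obtain ⟨t', ht', het⟩ := reps_complete.{u} t hdt
    have hchoice : ∀ k : Fin κ, ∃ s' ∈ reps (l + 1) d, HEquiv.{u} (s k) s' := fun k =>
      reps_complete.{u} (s k) (hds k)
    choose s' hs'mem hs'equiv using hchoice
    set S : List (HeytingTerm (l + 1)) :=
      (reps (l + 1) d).filter (fun r => decide (∃ k, s' k = r)) with hS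
    have hSsub : List.Sublist S (reps (l + 1) d) := List.filter_sublist
    have hpmem : (t', S) ∈ sysList l d := mem_sysList.2 ⟨ht', hSsub⟩
    have hsmem : ∀ k, s' k ∈ S := by
      intro k
      rw [hS, List.mem_filter]
      exact ⟨hs'mem k, by simp⟩
    have hSof : ∀ r ∈ S, ∃ k, HEquiv.{u} (s k) r := by
      intro r hr
      rw [hS, List.mem_filter] at hr
      obtain ⟨k, rfl⟩ := of_decide_eq_true hr.2
      exact ⟨k, hs'equiv k⟩
    have conv : ∀ b : Fin l → A, HasSolution t s b ↔ ∃ x : A, SolAt (t', S) b x := by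
      intro b
      exact hasSolution_iff_solAt t s t' S het
        (fun k => ⟨s' k, hsmem k, hs'equiv k⟩) hSof b
    have hagree := simDeg_iff_agreeOn.1 hsim
    constructor
    · intro hsol
      exact (conv a').2 (h a a' hagree (t', S) hpmem ((conv a).1 hsol))
    · intro hsol
      exact (conv a).2 (h a' a (agreeOn_symm hagree) (t', S) hpmem ((conv a').1 hsol))

/-- Monotonicity of `IndexProp` in `n`. -/
lemma indexProp_mono {A : Type u} [HeytingAlgebra A] {m : ℕ} (hmn : m ≤ n)
    (h : IndexProp A l d m) : IndexProp A l d n := by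
  intro a a' hsim
  exact h a a' fun t ht => hsim t (ht.trans hmn)

lemma hIndex_le_iff {A : Type u} [HeytingAlgebra A] :
    hIndex A l d ≤ (n : ℕ∞) ↔ IndexProp A l d n := by
  constructor
  · intro h
    by_contra hc
    have key : ∀ x ∈ {x : ℕ∞ | ∃ m : ℕ, x = ↑m ∧ IndexProp A l d m},
        ((n + 1 : ℕ) : ℕ∞) ≤ x := by
      rintro x ⟨m, rfl, hm⟩
      have hmn : ¬ m ≤ n := fun hmn => hc (indexProp_mono hmn hm)
      exact_mod_cast Nat.succ_le_of_lt (Nat.not_le.1 hmn)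
    have h2 := (le_sInf key).trans h
    have h3 : n + 1 ≤ n := by exact_mod_cast h2
    omega
  · intro h
    exact sInf_le ⟨n, rfl, h⟩

end HIndexAux

namespace HIndexAux

open HeytingTerm FirstOrder FirstOrder.Language

universe u

/-- Translation of a Heyting term into an `LHA`-term, given an assignment of variables to
de Bruijn indices. -/
def toTerm {k M : ℕ} (f : Fin k → Fin M) : HeytingTerm k → LHA.Term (Empty ⊕ Fin M)
  | .var i => Term.var (Sum.inr (f i))
  | .bot => Term.func (LHAFunc.bot : LHA.Functions 0) Fin.elim0
  | .top => Term.func (LHAFunc.top : LHA.Functions 0) Fin.elim0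
  | .inf a b => Term.func (LHAFunc.inf : LHA.Functions 2) ![toTerm f a, toTerm f b]
  | .sup a b => Term.func (LHAFunc.sup : LHA.Functions 2) ![toTerm f a, toTerm f b]
  | .himp a b => Term.func (LHAFunc.himp : LHA.Functions 2) ![toTerm f a, toTerm f b]

lemma realize_toTerm {A : Type u} [HeytingAlgebra A] {k M : ℕ} (f : Fin k → Fin M)
    (t : HeytingTerm k) (g : Empty ⊕ Fin M → A) :
    (toTerm f t).realize g = t.eval fun i => g (Sum.inr (f i)) := by
  induction t with
  | var i => rfl
  | bot => rfl
  | top => rfl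
  | inf a b iha ihb =>
    rw [toTerm]
    show (![toTerm f a, toTerm f b] 0).realize g ⊓ (![toTerm f a, toTerm f b] 1).realize g = _
    simp only [Matrix.cons_val_zero, Matrix.cons_val_one, Matrix.head_cons, iha, ihb]
    rfl
  | sup a b iha ihb =>
    rw [toTerm]
    show (![toTerm f a, toTerm f b] 0).realize g ⊔ (![toTerm f a, toTerm f b] 1).realize g = _
    simp only [Matrix.cons_val_zero, Matrix.cons_val_one, Matrix.head_cons, iha, ihb]
    rfl
  | himp a b iha ihb =>
    rw [toTerm]
    show (![toTerm f a, toTerm f b] 0).realize g ⇨ (![toTerm f a, toTerm f b] 1).realize g = _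
    simp only [Matrix.cons_val_zero, Matrix.cons_val_one, Matrix.head_cons, iha, ihb]
    rfl

/-- The atomic formula asserting that a term evaluates to `⊤`. -/
def eqTop {k M : ℕ} (f : Fin k → Fin M) (t : HeytingTerm k) : LHA.BoundedFormula Empty M :=
  Term.bdEqual (toTerm f t) (toTerm f .top)

lemma isQF_eqTop {k M : ℕ} (f : Fin k → Fin M) (t : HeytingTerm k) :
    (eqTop f t).IsQF :=
  (BoundedFormula.IsAtomic.equal _ _).isQF

lemma realize_eqTop {A : Type u} [HeytingAlgebra A] {k M : ℕ} (f : Fin k → Fin M)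
    (t : HeytingTerm k) (v : Empty → A) (zs : Fin M → A) :
    (eqTop f t).Realize v zs ↔ t.eval (fun i => zs (f i)) = ⊤ := by
  rw [eqTop, BoundedFormula.realize_bdEqual, realize_toTerm, realize_toTerm]
  rfl

/-- Finite conjunction of a list of formulas. -/
def andList {M : ℕ} : List (LHA.BoundedFormula Empty M) → LHA.BoundedFormula Empty M
  | [] => ⊤
  | φ :: L => φ ⊓ andList L

lemma isQF_andList {M : ℕ} {L : List (LHA.BoundedFormula Empty M)}
    (h : ∀ φ ∈ L, φ.IsQF) : (andList L).IsQF := by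
  induction L with
  | nil => exact BoundedFormula.IsQF.top
  | cons φ L ih =>
    exact (h φ (by simp)).inf (ih fun ψ hψ => h ψ (by simp [hψ]))

lemma realize_andList {A : Type u} [HeytingAlgebra A] {M : ℕ}
    {L : List (LHA.BoundedFormula Empty M)} (v : Empty → A) (zs : Fin M → A) :
    (andList L).Realize v zs ↔ ∀ φ ∈ L, φ.Realize v zs := by
  induction L with
  | nil => simp [andList]
  | cons φ L ih =>
    simp [andList, BoundedFormula.realize_inf, ih]

lemma BoundedFormula.IsQF.iff' {L' : FirstOrder.Language} {α : Type*} {m : ℕ}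
    {φ ψ : L'.BoundedFormula α m} (hφ : φ.IsQF) (hψ : ψ.IsQF) : (φ.iff ψ).IsQF :=
  (hφ.imp hψ).inf (hψ.imp hφ)

end HIndexAux

namespace HIndexAux

open HeytingTerm FirstOrder FirstOrder.Language

universe u

/-- Number of systems under consideration. -/
abbrev NN (l d : ℕ) : ℕ := (sysList l d).length

/-- Position of the `i`-th parameter of the first tuple. -/
def ia (l N : ℕ) (i : Fin l) : Fin (l + l + N + N) :=
  Fin.castAdd N (Fin.castAdd N (Fin.castAdd l i))

/-- Position of the `i`-th parameter of the second tuple. -/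
def ia' (l N : ℕ) (i : Fin l) : Fin (l + l + N + N) :=
  Fin.castAdd N (Fin.castAdd N (Fin.natAdd l i))

/-- Position of the `j`-th universal witness candidate. -/
def iu (l N : ℕ) (j : Fin N) : Fin (l + l + N + N) :=
  Fin.castAdd N (Fin.natAdd (l + l) j)

/-- Position of the `j`-th existential witness. -/
def iw (l N : ℕ) (j : Fin N) : Fin (l + l + N + N) :=
  Fin.natAdd (l + l + N) j

/-- The formula expressing that (the values at) `f` solve the system `p`. -/
def solF {l M : ℕ} (p : HeytingTerm (l + 1) × List (HeytingTerm (l + 1)))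
    (f : Fin (l + 1) → Fin M) : LHA.BoundedFormula Empty M :=
  eqTop f p.1 ⊓ andList (p.2.map fun s => (eqTop f s).not)

lemma isQF_solF {l M : ℕ} (p : HeytingTerm (l + 1) × List (HeytingTerm (l + 1)))
    (f : Fin (l + 1) → Fin M) : (solF p f).IsQF := by
  refine (isQF_eqTop f p.1).inf (isQF_andList ?_)
  intro φ hφ
  obtain ⟨s, _, rfl⟩ := List.mem_map.1 hφ
  exact (isQF_eqTop f s).not

lemma realize_solF_snoc {A : Type u} [HeytingAlgebra A] {l M : ℕ}
    (p : HeytingTerm (l + 1) × List (HeytingTerm (l + 1))) (fx : Fin l → Fin M) (bj : Fin M)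
    (v : Empty → A) (zs : Fin M → A) :
    (solF p (Fin.snoc fx bj)).Realize v zs ↔ SolAt p (fun i => zs (fx i)) (zs bj) := by
  have hfun : (fun i : Fin (l + 1) => zs ((Fin.snoc fx bj : Fin (l + 1) → Fin M) i)) = Fin.snoc (fun i => zs (fx i)) (zs bj) := by
    funext i
    refine Fin.lastCases ?_ (fun i => ?_) i
    · simp
    · simp
  simp only [solF, BoundedFormula.realize_inf, realize_eqTop, realize_andList,
    List.forall_mem_map, BoundedFormula.realize_not, hfun]
  exact Iff.rfl

/-- The main quantifier-free matrix. -/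
def mainF (l d n : ℕ) :
    LHA.BoundedFormula Empty (l + l + NN l d + NN l d) :=
  (andList ((reps l n).map fun r =>
      (eqTop (ia l (NN l d)) r).iff (eqTop (ia' l (NN l d)) r))).imp
  (andList ((List.finRange (NN l d)).map fun j =>
      (solF ((sysList l d).get j) (Fin.snoc (ia l (NN l d)) (iu l (NN l d) j))).imp
      (solF ((sysList l d).get j) (Fin.snoc (ia' l (NN l d)) (iw l (NN l d) j)))))

lemma isQF_mainF (l d n : ℕ) : (mainF l d n).IsQF := by
  refine BoundedFormula.IsQF.imp (isQF_andList ?_) (isQF_andList ?_)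
  · intro φ hφ
    obtain ⟨r, _, rfl⟩ := List.mem_map.1 hφ
    exact BoundedFormula.IsQF.iff' (isQF_eqTop _ _) (isQF_eqTop _ _)
  · intro φ hφ
    obtain ⟨j, _, rfl⟩ := List.mem_map.1 hφ
    exact (isQF_solF _ _).imp (isQF_solF _ _)

lemma realize_mainF {A : Type u} [HeytingAlgebra A] {l d n : ℕ} (v : Empty → A)
    (zs : Fin (l + l + NN l d + NN l d) → A) :
    (mainF l d n).Realize v zs ↔
      (AgreeOn n (fun i => zs (ia l (NN l d) i)) (fun i => zs (ia' l (NN l d) i)) →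
        ∀ j : Fin (NN l d),
          SolAt ((sysList l d).get j) (fun i => zs (ia l (NN l d) i)) (zs (iu l (NN l d) j)) →
          SolAt ((sysList l d).get j) (fun i => zs (ia' l (NN l d) i)) (zs (iw l (NN l d) j))) := by
  rw [mainF, BoundedFormula.realize_imp]
  constructor
  · intro h hag j
    have h' := h ?_
    · have := (realize_andList v zs).1 h' _
        (List.mem_map.2 ⟨j, List.mem_finRange j, rfl⟩)
      rw [BoundedFormula.realize_imp, realize_solF_snoc, realize_solF_snoc] at this
      exact this
    · rw [realize_andList]
      intro φ hφ
      obtain ⟨r, hr, rfl⟩ := List.mem_map.1 hφ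
      rw [BoundedFormula.realize_iff, realize_eqTop, realize_eqTop]
      exact hag r hr
  · intro h hagF
    have hag : AgreeOn n (fun i => zs (ia l (NN l d) i)) (fun i => zs (ia' l (NN l d) i)) := by
      intro r hr
      have := (realize_andList v zs).1 hagF _ (List.mem_map.2 ⟨r, hr, rfl⟩)
      rw [BoundedFormula.realize_iff, realize_eqTop, realize_eqTop] at this
      exact this
    rw [realize_andList]
    intro φ hφ
    obtain ⟨j, _, rfl⟩ := List.mem_map.1 hφ
    rw [BoundedFormula.realize_imp, realize_solF_snoc, realize_solF_snoc]
    exact h hag j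

lemma append_ia {A : Type u} {l N : ℕ} (xs : Fin (l + l + N) → A) (ys : Fin N → A)
    (i : Fin l) : Fin.append xs ys (ia l N i) = xs (Fin.castAdd N (Fin.castAdd l i)) :=
  Fin.append_left xs ys _

lemma append_ia' {A : Type u} {l N : ℕ} (xs : Fin (l + l + N) → A) (ys : Fin N → A)
    (i : Fin l) : Fin.append xs ys (ia' l N i) = xs (Fin.castAdd N (Fin.natAdd l i)) :=
  Fin.append_left xs ys _

lemma append_iu {A : Type u} {l N : ℕ} (xs : Fin (l + l + N) → A) (ys : Fin N → A)
    (j : Fin N) : Fin.append xs ys (iu l N j) = xs (Fin.natAdd (l + l) j) :=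
  Fin.append_left xs ys _

lemma append_iw {A : Type u} {l N : ℕ} (xs : Fin (l + l + N) → A) (ys : Fin N → A)
    (j : Fin N) : Fin.append xs ys (iw l N j) = ys j :=
  Fin.append_right xs ys _

lemma realize_exsN {L' : FirstOrder.Language} {α : Type*} {M : Type*} [L'.Structure M]
    {a : ℕ} : ∀ {b : ℕ} (φ : L'.BoundedFormula α (a + b)) (v : α → M) (xs : Fin a → M),
      (exsN φ).Realize v xs ↔ ∃ ys : Fin b → M, φ.Realize v (Fin.append xs ys) := by
  intro b
  induction b with
  | zero =>
    intro φ v xs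
    have he : ∀ ys : Fin 0 → M, Fin.append xs ys = xs := by
      intro ys
      rw [Subsingleton.elim ys Fin.elim0, Fin.append_elim0]
      rfl
    constructor
    · intro h
      exact ⟨Fin.elim0, by rw [he]; exact h⟩
    · rintro ⟨ys, h⟩
      rw [he ys] at h
      exact h
  | succ b ih =>
    intro φ v xs
    show (exsN φ.ex).Realize v xs ↔ _
    rw [ih φ.ex v xs]
    constructor
    · rintro ⟨ys, h⟩
      rw [BoundedFormula.realize_ex] at h
      obtain ⟨x, hx⟩ := h
      exact ⟨Fin.snoc ys x, by rw [Fin.append_snoc]; exact hx⟩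
    · rintro ⟨ys, h⟩
      refine ⟨Fin.init ys, BoundedFormula.realize_ex.2 ⟨ys (Fin.last b), ?_⟩⟩
      rw [← Fin.append_snoc, Fin.snoc_init_self]
      exact h

end HIndexAux

namespace HIndexAux

open HeytingTerm FirstOrder FirstOrder.Language

universe u

lemma finIndexProp_iff_realize {l d n : ℕ} (A : Type u) [HeytingAlgebra A] :
    FinIndexProp A l d n ↔
      ∀ xs : Fin (l + l + NN l d) → A, ∃ ys : Fin (NN l d) → A,
        (mainF l d n).Realize (default : Empty → A) (Fin.append xs ys) := by
  classical
  constructor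
  · intro h xs
    set a : Fin l → A := fun i => xs (Fin.castAdd (NN l d) (Fin.castAdd l i)) with ha
    set a' : Fin l → A := fun i => xs (Fin.castAdd (NN l d) (Fin.natAdd l i)) with ha'
    by_cases hag : AgreeOn n a a'
    · refine ⟨fun j => if hs : ∃ x : A, SolAt ((sysList l d).get j) a' x
          then hs.choose else ⊤, ?_⟩
      rw [realize_mainF]
      simp only [append_ia, append_ia', append_iu, append_iw, ← ha, ← ha']
      intro _ j hsol
      have hsol' : ∃ x : A, SolAt ((sysList l d).get j) a' x :=
        h a a' hag _ (List.get_mem _ j) ⟨_, hsol⟩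
      rw [dif_pos hsol']
      exact hsol'.choose_spec
    · refine ⟨fun _ => ⊤, ?_⟩
      rw [realize_mainF]
      simp only [append_ia, append_ia', ← ha, ← ha']
      intro hag'
      exact absurd hag' hag
  · intro h a a' hag p hp hsol
    obtain ⟨x, hx⟩ := hsol
    obtain ⟨j, hj⟩ := List.mem_iff_get.1 hp
    obtain ⟨ys, hy⟩ := h (Fin.append (Fin.append a a') (fun _ => x))
    rw [realize_mainF] at hy
    simp only [append_ia, append_ia', append_iu, append_iw, Fin.append_left,
      Fin.append_right] at hy
    have h2 := hy hag j (by rw [hj]; exact hx)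
    exact ⟨ys j, by rw [← hj]; exact h2⟩

end HIndexAux

/-- For all `l`, `d`, `n` there is an `∀∃`-sentence `σ` such that a Heyting algebra `A`
satisfies `σ` iff `h_{l,d}(A) ≤ n`. -/
theorem hIndex_le_iff_sentence (l d n : ℕ) :
    ∃ σ : LHA.Sentence,
      (∃ (a b : ℕ) (θ : LHA.BoundedFormula Empty (a + b)), θ.IsQF ∧ σ = (exsN θ).alls) ∧
      ∀ (A : Type*) [HeytingAlgebra A], (hIndex A l d ≤ (n : ℕ∞) ↔ A ⊨ σ) := by
  open HIndexAux in
  refine ⟨(exsN (mainF l d n)).alls,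
    ⟨l + l + NN l d, NN l d, mainF l d n, isQF_mainF l d n, rfl⟩, ?_⟩
  intro A _
  rw [HIndexAux.hIndex_le_iff, HIndexAux.indexProp_iff_finIndexProp,
    HIndexAux.finIndexProp_iff_realize]
  constructor
  · intro h
    exact FirstOrder.Language.BoundedFormula.realize_alls.2 fun xs =>
      (HIndexAux.realize_exsN _ _ _).2 (h xs)
  · intro h xs
    exact (HIndexAux.realize_exsN _ _ _).1
      (FirstOrder.Language.BoundedFormula.realize_alls.1 h xs)
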